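/- Let 𝔤 be a finite-dimensional real Lie algebra. Then 𝔤 is nilpotent if and only if there exists an ideal 𝔫 ⊆ 𝔤 such that both 𝔫 and the quotient Lie algebra 𝔤/[𝔫,𝔫] are nilpotent, where [𝔫,𝔫] denotes the derived ideal of 𝔫 (which is an ideal of 𝔤 since 𝔫 is). -/

import Mathlib

open LieModule

section Helpers

variable {L : Type*} [LieRing L] [LieAlgebra ℝ L]

theorem quotNilpIff (I : LieIdeal ℝ L) :
    LieRing.IsNilpotent (L ⧸ I) ↔ ∃ k, lowerCentralSeries ℝ L L k ≤ I := by
  have key : ∀ k : ℕ, lowerCentralSeries ℝ L (L ⧸ I) k = ⊥ ↔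
      lowerCentralSeries ℝ (L ⧸ I) (L ⧸ I) k = ⊥ := by
    intro k
    rw [← LieSubmodule.toSubmodule_inj, ← LieSubmodule.toSubmodule_inj,
      coe_lowerCentralSeries_ideal_quot_eq, LieSubmodule.bot_toSubmodule,
      LieSubmodule.bot_toSubmodule]
  constructor
  · intro h
    obtain ⟨k, hk⟩ := (LieModule.isNilpotent_iff ℝ (L ⧸ I) (L ⧸ I)).mp h
    exact (LieModule.isNilpotent_quotient_iff ℝ L L I).mp
      (LieModule.IsNilpotent.mk (L ⧸ I) ((key k).mpr hk))
  · intro h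
    obtain ⟨k, hk⟩ := (LieModule.isNilpotent_iff ℝ L (L ⧸ I)).mp
      ((LieModule.isNilpotent_quotient_iff ℝ L L I).mpr h)
    exact LieModule.IsNilpotent.mk (L ⧸ I) ((key k).mp hk)

end Helpers

theorem stmt10 (L : Type*) [LieRing L] [LieAlgebra ℝ L] [Module.Finite ℝ L] :
    LieRing.IsNilpotent L ↔
      ∃ n : LieIdeal ℝ L, LieRing.IsNilpotent ↥n ∧
        LieRing.IsNilpotent (L ⧸ (⁅n, n⁆ : LieIdeal ℝ L)) := by
  constructor
  · intro h
    refine ⟨⊥, LieModule.IsNilpotent.mk (R := ℝ) (k := 1) _ (Subsingleton.elim _ _), ?_⟩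
    rw [quotNilpIff]
    obtain ⟨k, hk⟩ := (LieModule.isNilpotent_iff ℝ L L).mp h
    exact ⟨k, hk.le.trans bot_le⟩
  · rintro ⟨n, hn, hq⟩
    obtain ⟨k, hk⟩ := (quotNilpIff _).mp hq
    obtain ⟨c, hc⟩ := (LieModule.isNilpotent_iff ℝ ↥n ↥n).mp hn
    rw [LieAlgebra.isNilpotent_iff_forall (R := ℝ)]
    intro x
    set f : Module.End ℝ L := LieAlgebra.ad ℝ L x with hf
    set D : ℕ → LieIdeal ℝ L := fun i => (fun J : LieIdeal ℝ L => ⁅n, J⁆)^[i] n with hD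
    have hD0 : D 0 = n := rfl
    have hDsucc : ∀ i, D (i + 1) = ⁅n, D i⁆ := fun i =>
      Function.iterate_succ_apply' (fun J : LieIdeal ℝ L => ⁅n, J⁆) i n
    -- invariance of the D i under f (they are ideals)
    have hinv : ∀ (i m : ℕ) (w : L), w ∈ D i → (f ^ m) w ∈ D i := by
      intro i m
      induction m with
      | zero => intro w hw; simpa using hw
      | succ m ih =>
        intro w hw
        rw [pow_succ']
        have : (f * f ^ m) w = f ((f ^ m) w) := rfl
        rw [this, hf, LieAlgebra.ad_apply]
        exact (D i).lie_mem (ih w hw)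
    -- f^k lands in D 1 = ⁅n, n⁆
    have hfk : ∀ y : L, (f ^ k) y ∈ D 1 := by
      intro y
      have h1 : (f ^ k) y ∈ lowerCentralSeries ℝ L L k := by
        have := iterate_toEnd_mem_lowerCentralSeries ℝ L L x y k
        rwa [← Module.End.pow_apply] at this
      have : lowerCentralSeries ℝ L L k ≤ D 1 := by
        rw [hDsucc 0, hD0]; exact hk
      exact this h1
    -- Leibniz: f^t of a bracket lies in the span of brackets of iterates
    have leib : ∀ (t : ℕ) (a b : L), (f ^ t) ⁅a, b⁆ ∈
        Submodule.span ℝ {z : L | ∃ s, s ≤ t ∧ z = ⁅(f ^ s) a, (f ^ (t - s)) b⁆} := by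
      intro t
      induction t with
      | zero =>
        intro a b
        exact Submodule.subset_span ⟨0, le_refl 0, by simp⟩
      | succ t ih =>
        intro a b
        have h1 : (f ^ (t + 1)) ⁅a, b⁆ = f ((f ^ t) ⁅a, b⁆) := by
          rw [pow_succ']; rfl
        rw [h1]
        refine Submodule.span_induction (p := fun z _ => f z ∈
            Submodule.span ℝ {z : L | ∃ s, s ≤ t + 1 ∧ z = ⁅(f ^ s) a, (f ^ (t + 1 - s)) b⁆})
          ?_ ?_ ?_ ?_ (ih a b)
        · rintro z ⟨s, hs, rfl⟩
          have hlz : f ⁅(f ^ s) a, (f ^ (t - s)) b⁆ =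
              ⁅(f ^ (s + 1)) a, (f ^ (t - s)) b⁆ + ⁅(f ^ s) a, (f ^ (t - s + 1)) b⁆ := by
            rw [hf, LieAlgebra.ad_apply, leibniz_lie]
            congr 1
            · congr 1
              rw [pow_succ']; rfl
            · congr 1
              rw [pow_succ']; rfl
          rw [hlz]
          refine Submodule.add_mem _ (Submodule.subset_span ⟨s + 1, by omega, ?_⟩)
            (Submodule.subset_span ⟨s, by omega, ?_⟩)
          · rw [Nat.succ_sub_succ]
          · rw [Nat.succ_sub hs]
        · simpa using Submodule.zero_mem _
        · intro z w _ _ hz hw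
          rw [map_add]; exact Submodule.add_mem _ hz hw
        · intro r z _ hz
          rw [map_smul]; exact Submodule.smul_mem _ r hz
    -- ⁅D 1, D j⁆ ≤ D (j + 2)
    have F4 : ∀ j, ∀ w ∈ D 1, ∀ z ∈ D j, ⁅w, z⁆ ∈ D (j + 2) := by
      intro j w hw z hz
      rw [hDsucc 0, hD0, ← LieSubmodule.mem_toSubmodule,
        LieSubmodule.lieIdeal_oper_eq_linear_span'] at hw
      refine Submodule.span_induction (p := fun w _ => ⁅w, z⁆ ∈ D (j + 2)) ?_ ?_ ?_ ?_ hw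
      · rintro w ⟨u, hu, v, hv, rfl⟩
        rw [lie_lie]
        have h1 : ⁅v, z⁆ ∈ D (j + 1) := by
          rw [hDsucc j]; exact LieSubmodule.lie_mem_lie hv hz
        have h2 : ⁅u, z⁆ ∈ D (j + 1) := by
          rw [hDsucc j]; exact LieSubmodule.lie_mem_lie hu hz
        have h3 : ⁅u, ⁅v, z⁆⁆ ∈ D (j + 2) := by
          rw [hDsucc (j + 1)]; exact LieSubmodule.lie_mem_lie hu h1
        have h4 : ⁅v, ⁅u, z⁆⁆ ∈ D (j + 2) := by
          rw [hDsucc (j + 1)]; exact LieSubmodule.lie_mem_lie hv h2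
        exact (D (j + 2)).sub_mem h3 h4
      · simpa using (D (j + 2)).zero_mem
      · intro a b _ _ ha hb
        rw [add_lie]; exact (D (j + 2)).add_mem ha hb
      · intro r a _ ha
        rw [smul_lie]; exact (D (j + 2)).smul_mem r ha
    -- main step: for each j there is N with f^N (D j) ⊆ D (j+1)
    have hU : ∀ j, ∃ N, ∀ w ∈ D j, (f ^ N) w ∈ D (j + 1) := by
      intro j
      induction j with
      | zero => exact ⟨k, fun w _ => hfk w⟩
      | succ j ih =>
        obtain ⟨N, hN⟩ := ih
        refine ⟨N + k, ?_⟩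
        intro w hw
        rw [hDsucc j, ← LieSubmodule.mem_toSubmodule,
          LieSubmodule.lieIdeal_oper_eq_linear_span'] at hw
        refine Submodule.span_induction (p := fun w _ => (f ^ (N + k)) w ∈ D (j + 1 + 1))
          ?_ ?_ ?_ ?_ hw
        · rintro w ⟨u, hu, v, hv, rfl⟩
          refine Submodule.span_le.mpr ?_ (leib (N + k) u v)
          rintro z ⟨s, hs, rfl⟩
          simp only [SetLike.mem_coe]
          by_cases hsk : k ≤ s
          · have h1 : (f ^ s) u ∈ D 1 := by
              have hse : k + (s - k) = s := by omega
              rw [← hse, pow_add, Module.End.mul_apply]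
              exact hfk _
            have h2 : (f ^ (N + k - s)) v ∈ D j := hinv j _ v hv
            exact F4 j _ h1 _ h2
          · have h2 : (f ^ (N + k - s)) v ∈ D (j + 1) := by
              have hse : N + (k - s) = N + k - s := by omega
              rw [← hse, pow_add, Module.End.mul_apply]
              exact hN _ (hinv j _ v hv)
            have h1 : (f ^ s) u ∈ n := by
              have := hinv 0 s u (by rwa [hD0])
              rwa [hD0] at this
            rw [hDsucc (j + 1)]
            exact LieSubmodule.lie_mem_lie h1 h2
        · simpa using (D (j + 1 + 1)).zero_mem
        · intro a b _ _ ha hb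
          rw [map_add]; exact (D (j + 1 + 1)).add_mem ha hb
        · intro r a _ ha
          rw [map_smul]; exact (D (j + 1 + 1)).smul_mem r ha
    -- consequently, for each j some power of f maps L into D j
    have hV : ∀ j, ∃ M, ∀ y : L, (f ^ M) y ∈ D j := by
      intro j
      induction j with
      | zero =>
        refine ⟨k, fun y => ?_⟩
        have := hfk y
        rw [hDsucc 0] at this
        rw [hD0]
        exact LieSubmodule.lie_le_left n n this
      | succ j ih =>
        obtain ⟨M, hM⟩ := ih
        obtain ⟨N, hN⟩ := hU j
        refine ⟨N + M, fun y => ?_⟩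
        have he : (f ^ (N + M)) y = (f ^ N) ((f ^ M) y) := by
          rw [← Module.End.mul_apply, ← pow_add]
        rw [he]
        exact hN _ (hM y)
    -- the D chain embeds in the lower central series of n
    have hP2 : ∀ (i : ℕ) (z : L), z ∈ D i →
        ∃ w ∈ lowerCentralSeries ℝ ↥n ↥n i, (w : L) = z := by
      intro i
      induction i with
      | zero =>
        intro z hz
        rw [hD0] at hz
        exact ⟨⟨z, hz⟩, LieSubmodule.mem_top _, rfl⟩
      | succ i ih =>
        intro z hz
        rw [hDsucc i, ← LieSubmodule.mem_toSubmodule,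
          LieSubmodule.lieIdeal_oper_eq_linear_span'] at hz
        refine Submodule.span_induction
          (p := fun z _ => ∃ w ∈ lowerCentralSeries ℝ ↥n ↥n (i + 1), (w : L) = z)
          ?_ ?_ ?_ ?_ hz
        · rintro z ⟨u, hu, v, hv, rfl⟩
          obtain ⟨w', hw', hwe⟩ := ih v hv
          refine ⟨⁅(⟨u, hu⟩ : ↥n), w'⁆, ?_, ?_⟩
          · rw [LieModule.lowerCentralSeries_succ]
            exact LieSubmodule.lie_mem_lie (LieSubmodule.mem_top _) hw'
          · rw [← hwe]; rfl
        · exact ⟨0, Submodule.zero_mem _, rfl⟩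
        · rintro a b _ _ ⟨wa, hwa, rfl⟩ ⟨wb, hwb, rfl⟩
          exact ⟨wa + wb, (lowerCentralSeries ℝ ↥n ↥n (i + 1)).add_mem hwa hwb, rfl⟩
        · rintro r a _ ⟨wa, hwa, rfl⟩
          exact ⟨r • wa, (lowerCentralSeries ℝ ↥n ↥n (i + 1)).smul_mem r hwa, rfl⟩
    -- conclude
    obtain ⟨M, hM⟩ := hV (c + 1)
    refine ⟨M, ?_⟩
    ext y
    obtain ⟨w, hw, hwe⟩ := hP2 (c + 1) _ (hM y)
    have hwb : w ∈ (⊥ : LieSubmodule ℝ ↥n ↥n) := by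
      rw [← hc]
      exact antitone_lowerCentralSeries ℝ ↥n ↥n (Nat.le_succ c) hw
    rw [LieSubmodule.mem_bot] at hwb
    simp only [LinearMap.zero_apply]
    rw [← hwe, hwb, ZeroMemClass.coe_zero]
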